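/- Let m and k be coprime positive integers with 0 < k < m, and let β, δ ∈ F_{2^m}^* be such that the polynomial X^{2^k+1} + X + β has no root in F_{2^m}. Then the F_2-linear map T on F_{2^m} defined by T(x) = x^{2^{2k}} + δ^{2^k} x^{2^k} + β δ^{2^k+1} x is a bijection of F_{2^m}. -/

import Mathlib

/-- Let `0 < k < m` with `gcd(k,m) = 1`, and let `β, δ ∈ F_{2^m}^*` be such that
`X^(2^k+1) + X + β` has no root in `F_{2^m}`.  Then the `F_2`-linear map
`T(x) = x^(2^(2k)) + δ^(2^k)·x^(2^k) + β·δ^(2^k+1)·x` is a bijection of `F_{2^m}`. -/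
theorem linearized_T_bijective (m k : ℕ) (hk : 0 < k) (hkm : k < m)
    (hgcd : Nat.gcd k m = 1) (β δ : GaloisField 2 m) (hβ : β ≠ 0) (hδ : δ ≠ 0)
    (hroot : ∀ x : GaloisField 2 m, x ^ (2 ^ k + 1) + x + β ≠ 0) :
    Function.Bijective (fun x : GaloisField 2 m =>
      x ^ (2 ^ (2 * k)) + δ ^ (2 ^ k) * x ^ (2 ^ k) + β * δ ^ (2 ^ k + 1) * x) := by
  have key : ∀ x : GaloisField 2 m,
      x ^ (2 ^ (2*k)) + δ ^ (2^k) * x ^ (2^k) + β * δ ^ (2^k+1) * x = 0 → x = 0 := by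
    intro x hx
    by_contra hx0
    set q := 2 ^ k with hq
    have hq1 : 1 ≤ q := Nat.one_le_two_pow
    obtain ⟨n, hn⟩ : ∃ n, q = n + 1 := ⟨q - 1, by omega⟩
    have hqq : 2 ^ (2*k) = q * q := by rw [hq, two_mul, pow_add]
    have main : x ^ (q*q) + δ ^ q * x ^ q + β * δ ^ (q+1) * x = 0 := by
      rw [← hqq]; exact hx
    apply hroot (x ^ (q-1) * δ⁻¹)
    set a := x ^ (q - 1) with ha
    have hxq : x ^ q = a * x := by rw [ha, ← pow_succ]; congr 1; omega
    have hxqq : x ^ (q*q) = a ^ (q+1) * x := by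
      rw [ha, ← pow_mul, ← pow_succ]
      congr 1
      rw [hn]
      simp only [Nat.add_sub_cancel]
      ring
    have hx' : x ≠ 0 := hx0
    have hcalc : (a * δ⁻¹) ^ (q+1) + a * δ⁻¹ + β
        = (x ^ (q*q) + δ ^ q * x ^ q + β * δ ^ (q+1) * x) * (x * δ ^ (q+1))⁻¹ := by
      rw [hxqq, hxq]
      field_simp
      have e1 : δ * δ⁻¹ = 1 := mul_inv_cancel₀ hδ
      have e2 : δ ^ q * δ⁻¹ ^ q = 1 := by rw [← mul_pow, e1, one_pow]
      linear_combination (δ * a * a ^ q * (δ ^ q * δ⁻¹ ^ q)) * e1 + (δ * a * a ^ q) * e2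
    rw [hcalc, main, zero_mul]
  have hinj : Function.Injective (fun x : GaloisField 2 m =>
      x ^ (2 ^ (2 * k)) + δ ^ (2 ^ k) * x ^ (2 ^ k) + β * δ ^ (2 ^ k + 1) * x) := by
    intro a b hab
    simp only at hab
    have h1 : (a - b) ^ (2 ^ (2*k)) = a ^ (2^(2*k)) - b ^ (2^(2*k)) :=
      sub_pow_char_pow a b _
    have h2 : (a - b) ^ (2 ^ k) = a ^ (2^k) - b ^ (2^k) :=
      sub_pow_char_pow a b _
    have := key (a - b) (by rw [h1, h2]; linear_combination hab)
    exact sub_eq_zero.mp this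
  exact Finite.injective_iff_bijective.mp hinj
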